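/- For a bounded sequence x in a normed space V, p(x) = 0 if and only if L(x) = 0 for every Banach limit functional L on ℓ^∞(V). -/

import Mathlib

open Filter Topology BoundedContinuousFunction

/-- The left shift operator on `ℓ^∞(V)`, realized as bounded continuous functions `ℕ →ᵇ V`. -/
noncomputable def leftShift {V : Type*} [NormedAddCommGroup V] (x : ℕ →ᵇ V) : ℕ →ᵇ V :=
  BoundedContinuousFunction.ofNormedAddCommGroup (fun n => x (n + 1))
    (continuous_of_discreteTopology) ‖x‖ (fun n => x.norm_coe_le_norm (n + 1))

section aux

variable {V : Type*} [NormedAddCommGroup V] [NormedSpace ℝ V]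

@[simp] lemma leftShift_apply (y : ℕ →ᵇ V) (n : ℕ) : leftShift y n = y (n + 1) := rfl

lemma leftShift_iter_apply (j : ℕ) (y : ℕ →ᵇ V) (k : ℕ) :
    (leftShift^[j] y) k = y (k + j) := by
  induction j generalizing y with
  | zero => simp
  | succ j ih =>
    rw [Function.iterate_succ_apply, ih (leftShift y)]
    simp [Nat.add_assoc]

/-- The `n`-th averaged sup term. -/
noncomputable def BLa (y : ℕ →ᵇ V) (n : ℕ) : ℝ :=
  ⨆ j : ℕ, ‖∑ i ∈ Finset.range n, y (i + j)‖ / (n : ℝ)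

lemma BLa_term_le (y : ℕ →ᵇ V) (n j : ℕ) :
    ‖∑ i ∈ Finset.range n, y (i + j)‖ / (n : ℝ) ≤ ‖y‖ := by
  rcases Nat.eq_zero_or_pos n with h | h
  · simp [h, norm_nonneg]
  · rw [div_le_iff₀ (by positivity)]
    calc ‖∑ i ∈ Finset.range n, y (i + j)‖ ≤ ∑ i ∈ Finset.range n, ‖y (i + j)‖ :=
          norm_sum_le _ _
      _ ≤ ∑ _i ∈ Finset.range n, ‖y‖ :=
          Finset.sum_le_sum fun i _ => y.norm_coe_le_norm _
      _ = ‖y‖ * n := by simp [mul_comm]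

lemma BLa_bdd (y : ℕ →ᵇ V) (n : ℕ) :
    BddAbove (Set.range fun j : ℕ => ‖∑ i ∈ Finset.range n, y (i + j)‖ / (n : ℝ)) := by
  refine ⟨‖y‖, ?_⟩
  rintro _ ⟨j, rfl⟩
  exact BLa_term_le y n j

lemma BLa_nonneg (y : ℕ →ᵇ V) (n : ℕ) : 0 ≤ BLa y n :=
  Real.iSup_nonneg fun j => by positivity

lemma BLa_le_norm (y : ℕ →ᵇ V) (n : ℕ) : BLa y n ≤ ‖y‖ :=
  ciSup_le fun j => BLa_term_le y n j

lemma BLa_term_le_BLa (y : ℕ →ᵇ V) (n j : ℕ) :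
    ‖∑ i ∈ Finset.range n, y (i + j)‖ / (n : ℝ) ≤ BLa y n :=
  le_ciSup (BLa_bdd y n) j

variable (p : (ℕ →ᵇ V) → ℝ)
variable (hp : ∀ y : ℕ →ᵇ V,
      Tendsto (fun n : ℕ => ⨆ j : ℕ, ‖∑ i ∈ Finset.range n, y (i + j)‖ / (n : ℝ))
        atTop (𝓝 (p y)))

include hp

lemma BL_tendsto (y : ℕ →ᵇ V) : Tendsto (BLa y) atTop (𝓝 (p y)) := hp y

lemma BLp_nonneg (y : ℕ →ᵇ V) : 0 ≤ p y :=
  ge_of_tendsto' (BL_tendsto p hp y) fun n => BLa_nonneg y n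

lemma BLp_le_norm (y : ℕ →ᵇ V) : p y ≤ ‖y‖ :=
  le_of_tendsto' (BL_tendsto p hp y) fun n => BLa_le_norm y n

lemma BLp_add (y z : ℕ →ᵇ V) : p (y + z) ≤ p y + p z := by
  refine le_of_tendsto_of_tendsto' (BL_tendsto p hp (y + z))
    ((BL_tendsto p hp y).add (BL_tendsto p hp z)) fun n => ?_
  refine ciSup_le fun j => ?_
  have h1 : ∑ i ∈ Finset.range n, (y + z) (i + j)
      = (∑ i ∈ Finset.range n, y (i + j)) + ∑ i ∈ Finset.range n, z (i + j) := by
    rw [← Finset.sum_add_distrib]; rfl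
  calc ‖∑ i ∈ Finset.range n, (y + z) (i + j)‖ / (n : ℝ)
      ≤ (‖∑ i ∈ Finset.range n, y (i + j)‖ + ‖∑ i ∈ Finset.range n, z (i + j)‖) / (n : ℝ) := by
        rw [h1]; gcongr; exact norm_add_le _ _
    _ = ‖∑ i ∈ Finset.range n, y (i + j)‖ / (n : ℝ)
        + ‖∑ i ∈ Finset.range n, z (i + j)‖ / (n : ℝ) := add_div _ _ _
    _ ≤ BLa y n + BLa z n := add_le_add (BLa_term_le_BLa y n j) (BLa_term_le_BLa z n j)

lemma BLp_smul (c : ℝ) (hc : 0 ≤ c) (y : ℕ →ᵇ V) : p (c • y) = c * p y := by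
  have key : ∀ n : ℕ, BLa (c • y) n = c * BLa y n := by
    intro n
    unfold BLa
    rw [Real.mul_iSup_of_nonneg hc]
    congr 1
    funext j
    have h1 : ∑ i ∈ Finset.range n, (c • y) (i + j) = c • ∑ i ∈ Finset.range n, y (i + j) := by
      rw [Finset.smul_sum]; rfl
    rw [h1, norm_smul, Real.norm_eq_abs, abs_of_nonneg hc, mul_div_assoc]
  have h2 : Tendsto (BLa (c • y)) atTop (𝓝 (c * p y)) :=
    ((BL_tendsto p hp y).const_mul c).congr fun n => (key n).symm
  exact tendsto_nhds_unique (BL_tendsto p hp (c • y)) h2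

lemma BLp_shift_sub (y : ℕ →ᵇ V) : p (leftShift y - y) = 0 ∧ p (y - leftShift y) = 0 := by
  have bound : ∀ (z : ℕ →ᵇ V), (∀ n j : ℕ,
      ‖∑ i ∈ Finset.range n, z (i + j)‖ ≤ 2 * ‖y‖) → p z = 0 := by
    intro z hz
    have h1 : Tendsto (BLa z) atTop (𝓝 (0 : ℝ)) := by
      have h2 : Tendsto (fun n : ℕ => 2 * ‖y‖ / (n : ℝ)) atTop (𝓝 (0 : ℝ)) :=
        tendsto_const_div_atTop_nhds_zero_nat _
      refine tendsto_of_tendsto_of_tendsto_of_le_of_le tendsto_const_nhds h2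
        (fun n => BLa_nonneg z n) (fun n => ?_)
      refine ciSup_le fun j => ?_
      rcases Nat.eq_zero_or_pos n with h | h
      · simp [h]
      · have hn : (0 : ℝ) < n := by exact_mod_cast h
        gcongr
        exact hz n j
    exact tendsto_nhds_unique (BL_tendsto p hp z) h1
  constructor
  · refine bound _ fun n j => ?_
    have h1 : ∑ i ∈ Finset.range n, (leftShift y - y) (i + j) = y (n + j) - y (0 + j) := by
      have := Finset.sum_range_sub (fun i => y (i + j)) n
      rw [← this]
      refine Finset.sum_congr rfl fun i _ => ?_
      show y (i + j + 1) - y (i + j) = y (i + 1 + j) - y (i + j)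
      have hij : i + j + 1 = i + 1 + j := by omega
      rw [hij]
    rw [h1]
    calc ‖y (n + j) - y (0 + j)‖ ≤ ‖y (n + j)‖ + ‖y (0 + j)‖ := norm_sub_le _ _
      _ ≤ ‖y‖ + ‖y‖ := add_le_add (y.norm_coe_le_norm _) (y.norm_coe_le_norm _)
      _ = 2 * ‖y‖ := by ring
  · refine bound _ fun n j => ?_
    have h1 : ∑ i ∈ Finset.range n, (y - leftShift y) (i + j) = y (0 + j) - y (n + j) := by
      have := Finset.sum_range_sub' (fun i => y (i + j)) n
      rw [← this]
      refine Finset.sum_congr rfl fun i _ => ?_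
      show y (i + j) - y (i + j + 1) = y (i + j) - y (i + 1 + j)
      have hij : i + j + 1 = i + 1 + j := by omega
      rw [hij]
    rw [h1, ← norm_neg, neg_sub]
    calc ‖y (n + j) - y (0 + j)‖ ≤ ‖y (n + j)‖ + ‖y (0 + j)‖ := norm_sub_le _ _
      _ ≤ ‖y‖ + ‖y‖ := add_le_add (y.norm_coe_le_norm _) (y.norm_coe_le_norm _)
      _ = 2 * ‖y‖ := by ring

lemma BLp_zero : p 0 = 0 := by
  have : (0 : ℝ) * p (0 : ℕ →ᵇ V) = p ((0:ℝ) • (0 : ℕ →ᵇ V)) := (BLp_smul p hp 0 le_rfl 0).symm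
  simpa using this.symm

end aux

/-- For a bounded sequence `x`, `p(x) = 0` iff `L(x) = 0` for every Banach limit
functional `L` on `ℓ^∞(V)` (i.e. every bounded linear functional with `‖L‖ ≤ 1` that is
shift-invariant). -/
theorem stmt_12 {V : Type*} [NormedAddCommGroup V] [NormedSpace ℝ V]
    (p : (ℕ →ᵇ V) → ℝ)
    (hp : ∀ y : ℕ →ᵇ V,
      Tendsto (fun n : ℕ => ⨆ j : ℕ, ‖∑ i ∈ Finset.range n, y (i + j)‖ / (n : ℝ))
        atTop (𝓝 (p y)))
    (x : ℕ →ᵇ V) :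
    p x = 0 ↔
      ∀ L : (ℕ →ᵇ V) →L[ℝ] ℝ, ‖L‖ ≤ 1 → (∀ y : ℕ →ᵇ V, L (leftShift y) = L y) →
        L x = 0 := by
  constructor
  · -- forward direction
    intro hpx L hL1 hLs
    have hiter : ∀ (j : ℕ) (y : ℕ →ᵇ V), L (leftShift^[j] y) = L y := by
      intro j
      induction j with
      | zero => intro y; simp
      | succ j ih => intro y; rw [Function.iterate_succ_apply, ih (leftShift y), hLs]
    -- |L x| ≤ BLa x n for n ≥ 1
    have key : ∀ n : ℕ, 1 ≤ n → |L x| ≤ BLa x n := by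
      intro n hn
      set S : ℕ →ᵇ V := ∑ j ∈ Finset.range n, leftShift^[j] x with hS
      have hLS : L S = n * L x := by
        rw [hS, map_sum]
        simp only [hiter]
        rw [Finset.sum_const, Finset.card_range, nsmul_eq_mul]
      have hSk : ∀ k : ℕ, S k = ∑ i ∈ Finset.range n, x (i + k) := by
        intro k
        have h1 : S k = ∑ j ∈ Finset.range n, (leftShift^[j] x) k := by
          rw [hS]
          induction (Finset.range n) using Finset.induction_on with
          | empty => simp
          | insert h ih => simp_all
        rw [h1]
        refine Finset.sum_congr rfl fun j _ => ?_
        rw [leftShift_iter_apply, Nat.add_comm]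
      have hSnorm : ‖S‖ ≤ (n : ℝ) * BLa x n := by
        refine BoundedContinuousFunction.norm_le (mul_nonneg (Nat.cast_nonneg n) (BLa_nonneg x n)) |>.mpr fun k => ?_
        rw [hSk k]
        have := BLa_term_le_BLa x n k
        rw [div_le_iff₀ (by exact_mod_cast hn)] at this
        linarith [this]
      have habs : |L x| * n ≤ (n : ℝ) * BLa x n := by
        calc |L x| * n = |L S| := by rw [hLS, abs_mul, Nat.abs_cast]; ring
          _ ≤ ‖L‖ * ‖S‖ := L.le_opNorm S
          _ ≤ 1 * ‖S‖ := mul_le_mul_of_nonneg_right hL1 (norm_nonneg S)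
          _ = ‖S‖ := one_mul _
          _ ≤ (n : ℝ) * BLa x n := hSnorm
      have hn' : (0 : ℝ) < n := by exact_mod_cast hn
      nlinarith [habs]
    have hle : |L x| ≤ p x :=
      ge_of_tendsto (BL_tendsto p hp x) (eventually_atTop.mpr ⟨1, fun n hn => key n hn⟩)
    rw [hpx] at hle
    exact abs_eq_zero.mp (le_antisymm hle (abs_nonneg _))
  · -- backward direction
    intro hL
    by_cases hx0 : x = 0
    · rw [hx0]; exact BLp_zero p hp
    -- build a Banach limit with L x = p x
    have hdom : ∀ c : ℝ, c • x = 0 → (RingHom.id ℝ) c • p x = 0 := by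
      intro c hc
      rcases smul_eq_zero.mp hc with h | h
      · simp [h]
      · exact absurd h hx0
    have hfle : ∀ z : (LinearPMap.mkSpanSingleton' x (p x) hdom).domain,
        (LinearPMap.mkSpanSingleton' x (p x) hdom) z ≤ p z := by
      rintro ⟨z, hz⟩
      have hz' : z ∈ Submodule.span ℝ {x} := by
        rw [← LinearPMap.domain_mkSpanSingleton x (p x) hdom]; exact hz
      obtain ⟨c, hc⟩ := Submodule.mem_span_singleton.mp hz'
      subst hc
      rw [LinearPMap.mkSpanSingleton'_apply]
      rcases le_or_gt 0 c with hcn | hcn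
      · rw [BLp_smul p hp c hcn x]; simp [smul_eq_mul]
      · have h1 : p ((-c) • x) = (-c) * p x := BLp_smul p hp (-c) (by linarith) x
        have h2 : (0 : ℝ) ≤ p (c • x) + p ((-c) • x) := by
          have := BLp_add p hp (c • x) ((-c) • x)
          have h3 : c • x + (-c) • x = 0 := by
            rw [← add_smul]; simp
          rw [h3, BLp_zero p hp] at this
          linarith
        rw [h1] at h2
        simp only [smul_eq_mul, RingHom.id_apply]
        linarith
    obtain ⟨g, hg_eq, hg_le⟩ := exists_extension_of_le_sublinear
      (LinearPMap.mkSpanSingleton' x (p x) hdom) p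
      (fun c hc y => BLp_smul p hp c hc.le y) (BLp_add p hp) hfle
    have hmem : x ∈ (LinearPMap.mkSpanSingleton' x (p x) hdom).domain := by
      rw [LinearPMap.domain_mkSpanSingleton]
      exact Submodule.mem_span_singleton_self x
    have hgx : g x = p x := by
      have h := hg_eq ⟨x, hmem⟩
      rw [LinearPMap.mkSpanSingleton'_apply_self] at h
      exact h
    have hgbound : ∀ y : ℕ →ᵇ V, ‖g y‖ ≤ 1 * ‖y‖ := by
      intro y
      rw [one_mul, Real.norm_eq_abs, abs_le]
      constructor
      · have := (hg_le (-y)).trans (BLp_le_norm p hp (-y))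
        rw [map_neg, norm_neg] at this
        linarith
      · exact (hg_le y).trans (BLp_le_norm p hp y)
    set L : (ℕ →ᵇ V) →L[ℝ] ℝ := g.mkContinuous 1 hgbound with hLdef
    have hLnorm : ‖L‖ ≤ 1 := g.mkContinuous_norm_le zero_le_one hgbound
    have hLshift : ∀ y : ℕ →ᵇ V, L (leftShift y) = L y := by
      intro y
      have h2 : g (leftShift y) - g y ≤ 0 := by
        have h := hg_le (leftShift y - y)
        rw [(BLp_shift_sub p hp y).1, map_sub] at h
        exact h
      have h3 : g y - g (leftShift y) ≤ 0 := by
        have h := hg_le (y - leftShift y)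
        rw [(BLp_shift_sub p hp y).2, map_sub] at h
        exact h
      show g (leftShift y) = g y
      linarith
    have h0 := hL L hLnorm hLshift
    rw [show L x = g x from rfl, hgx] at h0
    exact h0
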